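/- Let 𝔤* be a Lie algebra with nondegenerate symmetric bilinear form a, A its infinitesimal Levi-Civita connection, and B, a^c the lifted connection and complete form on 𝔤* ⋉ 𝔤*. Then B is metric with respect to a^c: a^c(B_{(α,β)}(α',β'), (α'',β'')) + a^c((α',β'), B_{(α,β)}(α'',β'')) = 0 for all elements of 𝔤* × 𝔤*. -/
import Mathlib


/-- The lifted connection `B` on `𝔤* ⋉ 𝔤*` is metric with respect to the
complete lift form `a^c`. -/
theorem lifted_connection_metric
    (L : Type*) [LieRing L] [LieAlgebra ℝ L]
    (a : L →ₗ[ℝ] L →ₗ[ℝ] ℝ)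
    (hsymm : ∀ x y, a x y = a y x)
    (hnd : ∀ x, (∀ y, a x y = 0) → x = 0)
    (A : L →ₗ[ℝ] L →ₗ[ℝ] L)
    (hK : ∀ α β γ, 2 * a (A α β) γ = a ⁅α, β⁆ γ + a ⁅γ, α⁆ β + a ⁅γ, β⁆ α) :
    let ac : L × L → L × L → ℝ := fun p q => a p.1 q.2 + a p.2 q.1
    let B : L × L → L × L → L × L :=
      fun p q => (A p.1 q.2 + A p.2 q.1, A p.2 q.2)
    ∀ p q r : L × L, ac (B p q) r + ac q (B p r) = 0 := by
  have key : ∀ α β γ, a (A α β) γ + a β (A α γ) = 0 := by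
    intro α β γ
    have h1 := hK α β γ
    have h2 := hK α γ β
    have e1 : a ⁅β, α⁆ γ = - a ⁅α, β⁆ γ := by rw [← lie_skew α β, map_neg, LinearMap.neg_apply, neg_neg]
    have e2 : a ⁅γ, α⁆ β = - a ⁅α, γ⁆ β := by rw [← lie_skew α γ, map_neg, LinearMap.neg_apply, neg_neg]
    have e3 : a ⁅β, γ⁆ α = - a ⁅γ, β⁆ α := by rw [← lie_skew γ β, map_neg, LinearMap.neg_apply, neg_neg]
    have hs := hsymm β (A α γ)
    linarith
  intro ac B p q r
  simp only [ac, B, map_add, LinearMap.add_apply]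
  have k1 := key p.1 q.2 r.2
  have k2 := key p.2 q.1 r.2
  have k3 := key p.2 q.2 r.1
  have s1 := hsymm q.1 (A p.2 r.2)
  have s2 := hsymm q.2 (A p.1 r.2)
  have s3 := hsymm (A p.2 q.1) r.2
  have s4 := hsymm q.2 (A p.2 r.1)
  have s5 := hsymm (A p.2 q.2) r.1
  have s6 := hsymm q.1 (A p.2 r.2)
  have k2' := key p.2 r.2 q.1
  have k3' := key p.2 r.1 q.2
  linarith
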